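/- For every d ∈ (0,1] there exists ε₀ > 0 such that for every ε ∈ (0, ε₀] there exists r₀ ∈ ℕ such that for every r ≥ r₀ there exists ζ₀ > 0 such that for every ζ ∈ (0, ζ₀] there exists n₀ such that for every n ≥ n₀ the following holds. Let G be an n-vertex simple graph with an ε-regular partition V(G) = V_1 ⊔ … ⊔ V_r and let R be the (ε,d)-reduced graph of G with respect to this partition. If R is connected and non-bipartite, then there is an odd integer L ≤ 2r such that for every pair i, j ∈ V(R) (not necessarily distinct) and every two sets X ⊆ V_i with |X| ≥ d|V_i| and Y ⊆ V_j with |Y| ≥ d|V_j|, there are at least ζ n^{L+1} paths in G of length L with one endvertex in X and the other endvertex in Y. -/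

import Mathlib

open scoped Classical

namespace Stmt

/-- The number of edges of `G` between `A` and `B` (ordered pairs). -/
noncomputable def interCount {V : Type} [Fintype V] (G : SimpleGraph V)
    (A B : Finset V) : ℕ :=
  ((A ×ˢ B).filter fun p => G.Adj p.1 p.2).card

/-- The edge density between `A` and `B` in `G`. -/
noncomputable def density {V : Type} [Fintype V] (G : SimpleGraph V)
    (A B : Finset V) : ℝ :=
  (interCount G A B : ℝ) / ((A.card : ℝ) * (B.card : ℝ))

/-- The pair `(A, B)` is `ε`-regular in `G`. -/
def EpsRegular {V : Type} [Fintype V] (G : SimpleGraph V) (ε : ℝ)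
    (A B : Finset V) : Prop :=
  ∀ A' ⊆ A, ∀ B' ⊆ B, ε * (A.card : ℝ) ≤ (A'.card : ℝ) →
    ε * (B.card : ℝ) ≤ (B'.card : ℝ) →
    |density G A' B' - density G A B| ≤ ε

/-- `P` is an `ε`-regular partition of `G` into `r` parts: the parts are pairwise disjoint,
cover the vertex set, have sizes differing by at most 1, and all but at most `εr²` pairs of
indices give `ε`-regular pairs. -/
def IsRegularPartition {V : Type} [Fintype V] (G : SimpleGraph V) (ε : ℝ) {r : ℕ}
    (P : Fin r → Finset V) : Prop :=
  (∀ i j, i ≠ j → Disjoint (P i) (P j)) ∧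
  (∀ v : V, ∃ i, v ∈ P i) ∧
  (∀ i j, (P i).card ≤ (P j).card + 1) ∧
  (((Finset.univ.filter fun q : Fin r × Fin r =>
      ¬ EpsRegular G ε (P q.1) (P q.2)).card : ℝ) ≤ ε * (r : ℝ) ^ 2)

/-- The `(ε, d)`-reduced graph of `G` with respect to the partition `P`: vertices are the
indices and `i ∼ j` iff `(P i, P j)` is an `ε`-regular pair of density at least `d`. -/
def reducedGraph {V : Type} [Fintype V] (G : SimpleGraph V) (ε d : ℝ) {r : ℕ}
    (P : Fin r → Finset V) : SimpleGraph (Fin r) :=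
  SimpleGraph.fromRel fun i j => EpsRegular G ε (P i) (P j) ∧ d ≤ density G (P i) (P j)

/-- A graph is bipartite if its vertex set can be partitioned into two independent sets. -/
def IsBipartite {V : Type} (H : SimpleGraph V) : Prop :=
  ∃ S : Set V, ∀ ⦃u v : V⦄, H.Adj u v → (u ∈ S ↔ v ∉ S)

/-- The set of paths of length `L` in `G` starting in `X` and ending in `Y`. -/
def pathsBetween {V : Type} (G : SimpleGraph V) (L : ℕ) (X Y : Set V) :
    Set (Σ u : V, Σ v : V, G.Walk u v) :=
  {q | q.2.2.IsPath ∧ q.2.2.length = L ∧ q.1 ∈ X ∧ q.2.1 ∈ Y}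

variable {V : Type} [Fintype V]

lemma interCount_comm (G : SimpleGraph V) (A B : Finset V) :
    interCount G A B = interCount G B A := by
  unfold interCount
  apply Finset.card_bij (fun p _ => (p.2, p.1))
  · intro p hp
    simp only [Finset.mem_filter, Finset.mem_product] at *
    exact ⟨⟨hp.1.2, hp.1.1⟩, hp.2.symm⟩
  · intro p hp q hq h
    cases p; cases q
    simp only [Prod.mk.injEq] at h
    simp [h.1, h.2]
  · intro p hp
    refine ⟨(p.2, p.1), ?_, rfl⟩
    simp only [Finset.mem_filter, Finset.mem_product] at *
    exact ⟨⟨hp.1.2, hp.1.1⟩, hp.2.symm⟩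

lemma density_comm (G : SimpleGraph V) (A B : Finset V) :
    density G A B = density G B A := by
  unfold density
  rw [interCount_comm, mul_comm]

lemma epsRegular_symm {G : SimpleGraph V} {ε : ℝ} {A B : Finset V}
    (h : EpsRegular G ε A B) : EpsRegular G ε B A := by
  intro B' hB' A' hA' hB'c hA'c
  have := h A' hA' B' hB' hA'c hB'c
  rwa [density_comm G A' B', density_comm G A B] at this

lemma interCount_eq_sum (G : SimpleGraph V) (X T : Finset V) :
    interCount G X T = ∑ b ∈ T, (X.filter fun x => G.Adj x b).card := by
  unfold interCount
  rw [Finset.card_eq_sum_card_fiberwise (f := Prod.snd) (t := T)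
    (by intro p hp; simp only [Finset.mem_coe, Finset.mem_filter, Finset.mem_product] at hp; exact hp.1.2)]
  refine Finset.sum_congr rfl fun b hb => ?_
  apply Finset.card_bij (fun p _ => p.1)
  · intro p hp
    simp only [Finset.mem_filter, Finset.mem_product] at hp ⊢
    obtain ⟨⟨⟨h1, h2⟩, h3⟩, h4⟩ := hp
    exact ⟨h1, h4 ▸ h3⟩
  · intro p hp q hq h
    simp only [Finset.mem_filter, Finset.mem_product] at hp hq
    cases p; cases q
    simp only at h
    exact Prod.ext h (hp.2.trans hq.2.symm)
  · intro x hx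
    simp only [Finset.mem_filter] at hx
    refine ⟨(x, b), ?_, rfl⟩
    simp only [Finset.mem_filter, Finset.mem_product]
    simp [hx.1, hx.2, hb]

lemma good_nbrs (G : SimpleGraph V) {ε : ℝ} (hε : 0 < ε) {A B X : Finset V}
    (hreg : EpsRegular G ε A B) (hX : X ⊆ A) (hXc : ε * (A.card : ℝ) ≤ (X.card : ℝ))
    (hX0 : 0 < X.card) (hB0 : 0 < B.card) :
    (((B.filter fun b =>
        ((X.filter (G.Adj b)).card : ℝ) < (density G A B - ε) * (X.card : ℝ)).card : ℝ))
      < ε * (B.card : ℝ) := by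
  by_contra hcon
  push_neg at hcon
  set bad := B.filter fun b =>
    ((X.filter (G.Adj b)).card : ℝ) < (density G A B - ε) * (X.card : ℝ) with hbaddef
  have hbadB : bad ⊆ B := Finset.filter_subset _ _
  have hkey := hreg X hX bad hbadB hXc hcon
  have hbadpos : 0 < bad.card := by
    have h0 : (0:ℝ) < ε * (B.card : ℝ) := by positivity
    have : (0:ℝ) < (bad.card : ℝ) := lt_of_lt_of_le h0 hcon
    exact_mod_cast this
  have hXr : (0:ℝ) < (X.card : ℝ) := by exact_mod_cast hX0
  have h1 : density G A B - ε ≤ density G X bad := by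
    have := (abs_le.mp hkey).1
    linarith
  have h2 : (density G A B - ε) * ((X.card : ℝ) * (bad.card : ℝ)) ≤ (interCount G X bad : ℝ) := by
    have hD : (0:ℝ) < (X.card : ℝ) * (bad.card : ℝ) := by
      have : (0:ℝ) < (bad.card : ℝ) := by exact_mod_cast hbadpos
      positivity
    have hd : density G X bad = (interCount G X bad : ℝ) / ((X.card : ℝ) * (bad.card : ℝ)) := rfl
    rw [hd, le_div_iff₀ hD] at h1
    exact h1
  have h3 : (interCount G X bad : ℝ) < (density G A B - ε) * ((X.card : ℝ) * (bad.card : ℝ)) := by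
    rw [interCount_eq_sum]
    push_cast
    have hne : bad.Nonempty := Finset.card_pos.mp hbadpos
    have hlt : ∀ b ∈ bad,
        ((X.filter fun x => G.Adj x b).card : ℝ) < (density G A B - ε) * (X.card : ℝ) := by
      intro b hb
      have hb' := Finset.mem_filter.mp hb
      have : (X.filter fun x => G.Adj x b) = X.filter (G.Adj b) := by
        apply Finset.filter_congr
        intro x _
        constructor
        · exact fun h => h.symm
        · exact fun h => h.symm
      rw [this]
      exact hb'.2
    calc (∑ b ∈ bad, ((X.filter fun x => G.Adj x b).card : ℝ))
        < ∑ _b ∈ bad, (density G A B - ε) * (X.card : ℝ) :=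
          Finset.sum_lt_sum_of_nonempty hne hlt
      _ = (bad.card : ℝ) * ((density G A B - ε) * (X.card : ℝ)) := by
          rw [Finset.sum_const, nsmul_eq_mul]
      _ = (density G A B - ε) * ((X.card : ℝ) * (bad.card : ℝ)) := by ring
  linarith


variable {V : Type} [Fintype V]

noncomputable def chainSet (G : SimpleGraph V) (L : ℕ) (S : ℕ → Finset V) :
    Finset (Fin (L+1) → V) :=
  Finset.univ.filter fun f => (∀ k : Fin (L+1), f k ∈ S k) ∧
    (∀ k : Fin L, G.Adj (f k.castSucc) (f k.succ))

lemma chainSet_zero_card (G : SimpleGraph V) (S : ℕ → Finset V) :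
    (chainSet G 0 S).card = (S 0).card := by
  apply Finset.card_bij (fun f _ => f 0)
  · intro f hf
    simp only [chainSet, Finset.mem_filter, Finset.mem_univ, true_and] at hf
    exact hf.1 0
  · intro f hf g hg h
    funext k
    have hk : k = 0 := by
      apply Fin.ext
      have := k.isLt
      simp only [Fin.val_zero]
      omega
    rw [hk]; exact h
  · intro v hv
    refine ⟨fun _ => v, ?_, rfl⟩
    simp only [chainSet, Finset.mem_filter, Finset.mem_univ, true_and]
    refine ⟨fun k => ?_, fun k => k.elim0⟩
    have hk : (k:ℕ) = 0 := by have := k.isLt; omega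
    rw [hk]; exact hv

lemma chainSet_succ_card (G : SimpleGraph V) {β : ℝ} (S : ℕ → Finset V) (L : ℕ)
    (h : ∀ v ∈ S L, β * ((S (L+1)).card : ℝ) ≤ (((S (L+1)).filter (G.Adj v)).card : ℝ)) :
    ((chainSet G L S).card : ℝ) * (β * ((S (L+1)).card : ℝ))
      ≤ ((chainSet G (L+1) S).card : ℝ) := by
  set E : (Fin (L+1) → V) → Finset (Fin (L+2) → V) :=
    fun f => ((S (L+1)).filter (G.Adj (f (Fin.last L)))).image (fun v => (Fin.snoc f v : Fin (L+1+1) → V)) with hE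
  have hsnoc_inj : ∀ f : Fin (L+1) → V, Function.Injective (fun v : V => (Fin.snoc f v : Fin (L+1+1) → V)) := by
    intro f v v' hvv
    have := congrFun hvv (Fin.last (L+1))
    simpa [Fin.snoc_last] using this
  have hsub : (chainSet G L S).biUnion E ⊆ chainSet G (L+1) S := by
    intro x hx
    simp only [Finset.mem_biUnion] at hx
    obtain ⟨f, hf, hx⟩ := hx
    simp only [hE, Finset.mem_image, Finset.mem_filter] at hx
    obtain ⟨v, ⟨hv, hadjv⟩, rfl⟩ := hx
    simp only [chainSet, Finset.mem_filter, Finset.mem_univ, true_and] at hf ⊢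
    constructor
    · intro k
      refine Fin.lastCases ?_ ?_ k
      · rw [Fin.snoc_last]
        exact hv
      · intro i
        rw [Fin.snoc_castSucc]
        exact hf.1 i
    · intro k
      refine Fin.lastCases ?_ ?_ k
      · simp only [Fin.succ_last, Fin.snoc_last, Fin.snoc_castSucc]
        exact hadjv
      · intro i
        simp only [Fin.succ_castSucc, Fin.snoc_castSucc]
        exact hf.2 i
  have hdisj : ∀ f ∈ chainSet G L S, ∀ g ∈ chainSet G L S, f ≠ g → Disjoint (E f) (E g) := by
    intro f _ g _ hfg
    rw [Finset.disjoint_left]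
    intro x hxf hxg
    apply hfg
    simp only [hE, Finset.mem_image] at hxf hxg
    obtain ⟨v, _, rfl⟩ := hxf
    obtain ⟨v', _, hg⟩ := hxg
    funext i
    have := congrFun hg i.castSucc
    simpa [Fin.snoc_castSucc] using this.symm
  have hcard : ((chainSet G L S).biUnion E).card = ∑ f ∈ chainSet G L S, (E f).card :=
    Finset.card_biUnion hdisj
  have hEcard : ∀ f ∈ chainSet G L S, β * ((S (L+1)).card : ℝ) ≤ ((E f).card : ℝ) := by
    intro f hf
    have hmem : f (Fin.last L) ∈ S L := by
      simp only [chainSet, Finset.mem_filter, Finset.mem_univ, true_and] at hf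
      have := hf.1 (Fin.last L)
      simpa using this
    have h1 := h _ hmem
    have h2 : (E f).card = ((S (L+1)).filter (G.Adj (f (Fin.last L)))).card :=
      Finset.card_image_of_injective _ (hsnoc_inj f)
    rw [h2]
    exact h1
  calc ((chainSet G L S).card : ℝ) * (β * ((S (L+1)).card : ℝ))
      = ∑ _f ∈ chainSet G L S, (β * ((S (L+1)).card : ℝ)) := by
        rw [Finset.sum_const, nsmul_eq_mul]
    _ ≤ ∑ f ∈ chainSet G L S, ((E f).card : ℝ) := Finset.sum_le_sum hEcard
    _ = (((chainSet G L S).biUnion E).card : ℝ) := by rw [hcard]; push_cast; rfl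
    _ ≤ ((chainSet G (L+1) S).card : ℝ) := by
        exact_mod_cast Finset.card_le_card hsub

lemma chainSet_card (G : SimpleGraph V) {β : ℝ} (hβ : 0 ≤ β) (S : ℕ → Finset V) :
    ∀ L : ℕ,
      (∀ k < L, ∀ v ∈ S k,
        β * ((S (k+1)).card : ℝ) ≤ (((S (k+1)).filter (G.Adj v)).card : ℝ)) →
      ((S 0).card : ℝ) * ∏ k ∈ Finset.range L, (β * ((S (k+1)).card : ℝ))
        ≤ ((chainSet G L S).card : ℝ) := by
  intro L
  induction L with
  | zero =>
    intro _
    simp [chainSet_zero_card]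
  | succ L ih =>
    intro hh
    have ih' := ih (fun k hk => hh k (by omega))
    have hstep := chainSet_succ_card G S L (hh L (by omega))
    have hfac : 0 ≤ β * ((S (L+1)).card : ℝ) := by positivity
    calc ((S 0).card : ℝ) * ∏ k ∈ Finset.range (L+1), (β * ((S (k+1)).card : ℝ))
        = (((S 0).card : ℝ) * ∏ k ∈ Finset.range L, (β * ((S (k+1)).card : ℝ)))
            * (β * ((S (L+1)).card : ℝ)) := by
          rw [Finset.prod_range_succ]; ring
      _ ≤ ((chainSet G L S).card : ℝ) * (β * ((S (L+1)).card : ℝ)) := by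
          apply mul_le_mul_of_nonneg_right ih' hfac
      _ ≤ ((chainSet G (L+1) S).card : ℝ) := hstep

variable {V : Type} [Fintype V]

omit [Fintype V] in
lemma exists_walk_of_chain (G : SimpleGraph V) :
    ∀ (l : List V), l.Chain' G.Adj → ∀ u v : V, l.head? = some u → l.getLast? = some v →
      ∃ w : G.Walk u v, w.support = l := by
  intro l
  induction l with
  | nil => intro _ u v hu _; simp at hu
  | cons a t ih =>
    intro hc u v hu hv
    simp only [List.head?_cons, Option.some.injEq] at hu
    subst hu
    cases t with
    | nil =>
      simp only [List.getLast?_singleton, Option.some.injEq] at hv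
      subst hv
      exact ⟨SimpleGraph.Walk.nil, rfl⟩
    | cons b t' =>
      have hadj : G.Adj a b := (List.isChain_cons_cons.mp hc).1
      have hc' : (b :: t').Chain' G.Adj := (List.isChain_cons_cons.mp hc).2
      have hv' : (b :: t').getLast? = some v := by
        rw [← hv]; exact (List.getLast?_cons_cons ..).symm
      obtain ⟨w', hw'⟩ := ih hc' b v rfl hv'
      exact ⟨SimpleGraph.Walk.cons hadj w', by simp [hw']⟩

omit [Fintype V] in
lemma walk_eq_of_support_eq {G : SimpleGraph V} {u v : V} :
    ∀ (p q : G.Walk u v), p.support = q.support → p = q := by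
  intro p
  induction p with
  | nil =>
    intro q hq
    cases q with
    | nil => rfl
    | cons h r =>
      exfalso
      simp only [SimpleGraph.Walk.support_nil, SimpleGraph.Walk.support_cons] at hq
      have := r.support_ne_nil
      simp only [List.cons.injEq] at hq
      exact this hq.2.symm
  | @cons a b c h r ih =>
    intro q hq
    cases q with
    | nil =>
      exfalso
      simp only [SimpleGraph.Walk.support_nil, SimpleGraph.Walk.support_cons] at hq
      have := r.support_ne_nil
      simp only [List.cons.injEq] at hq
      exact this hq.2
    | cons h' r' =>
      rename_i b'
      have hsupp : r.support = r'.support := by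
        simp only [SimpleGraph.Walk.support_cons, List.cons.injEq] at hq
        exact hq.2
      have h1 : r.support.head? = some b := by rw [r.support_eq_cons]; rfl
      have h2 : r'.support.head? = some b' := by rw [r'.support_eq_cons]; rfl
      rw [hsupp, h2] at h1
      have hb := Option.some.inj h1
      subst hb
      rw [ih r' hsupp]

lemma lists_length_finite (n : ℕ) : {l : List V | l.length = n}.Finite := by
  have : {l : List V | l.length = n} ⊆ Set.range (List.ofFn : (Fin n → V) → List V) := by
    intro l hl
    simp only [Set.mem_setOf_eq] at hl
    subst hl
    exact ⟨l.get, List.ofFn_get l⟩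
  exact (Set.finite_range _).subset this

lemma card_noninj_le (L : ℕ) :
    (((Finset.univ : Finset (Fin (L+1) → V)).filter fun f => ¬ Function.Injective f).card : ℝ)
      ≤ ((L+1)^2 : ℝ) * ((Fintype.card V : ℝ))^L := by
  classical
  set Bp : Fin (L+1) × Fin (L+1) → Finset (Fin (L+1) → V) :=
    fun p => Finset.univ.filter (fun f => f p.1 = f p.2) with hBp
  have hsub : (Finset.univ.filter fun f : Fin (L+1) → V => ¬ Function.Injective f)
      ⊆ ((Finset.univ : Finset (Fin (L+1) × Fin (L+1))).filter fun p => p.1 ≠ p.2).biUnion Bp := by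
    intro f hf
    rw [Finset.mem_filter] at hf
    simp only [Finset.mem_filter, Finset.mem_univ, true_and, Function.Injective] at hf
    push_neg at hf
    obtain ⟨a, b, hab, hne⟩ := hf
    simp only [Finset.mem_biUnion, Finset.mem_filter, Finset.mem_univ, true_and]
    exact ⟨(a, b), hne, by simp [hBp, hab]⟩
  have hBpcard : ∀ p : Fin (L+1) × Fin (L+1), p.1 ≠ p.2 → (Bp p).card ≤ (Fintype.card V)^L := by
    intro p hp
    have : (Bp p).card ≤ (Finset.univ : Finset (Fin L → V)).card := by
      apply Finset.card_le_card_of_injOn (fun f => f ∘ p.1.succAbove)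
      · intro f _; exact Finset.mem_univ _
      · intro f hf g hg hfg
        simp only [Finset.coe_filter, Set.mem_setOf_eq, hBp, Finset.mem_univ, true_and,
          Finset.mem_coe, Finset.mem_filter] at hf hg
        have hfg' : ∀ t, f (p.1.succAbove t) = g (p.1.succAbove t) :=
          fun t => congrFun hfg t
        funext x
        by_cases hx : x = p.1
        · obtain ⟨z, hz⟩ := Fin.exists_succAbove_eq (Ne.symm hp)
          subst hx
          calc f p.1 = f p.2 := hf
            _ = f (p.1.succAbove z) := by rw [hz]
            _ = g (p.1.succAbove z) := hfg' z
            _ = g p.2 := by rw [hz]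
            _ = g p.1 := hg.symm
        · obtain ⟨z, hz⟩ := Fin.exists_succAbove_eq hx
          rw [← hz]
          exact hfg' z
    calc (Bp p).card ≤ (Finset.univ : Finset (Fin L → V)).card := this
      _ = (Fintype.card V)^L := by
        rw [Finset.card_univ, Fintype.card_fun, Fintype.card_fin]
  have h1 : ((Finset.univ.filter fun f : Fin (L+1) → V => ¬ Function.Injective f).card : ℕ)
      ≤ (L+1)^2 * (Fintype.card V)^L := by
    calc (Finset.univ.filter fun f : Fin (L+1) → V => ¬ Function.Injective f).card
        ≤ (((Finset.univ : Finset (Fin (L+1) × Fin (L+1))).filter fun p => p.1 ≠ p.2).biUnion Bp).card :=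
          Finset.card_le_card hsub
      _ ≤ ∑ p ∈ (Finset.univ : Finset (Fin (L+1) × Fin (L+1))).filter fun p => p.1 ≠ p.2, (Bp p).card :=
          Finset.card_biUnion_le
      _ ≤ ∑ p ∈ (Finset.univ : Finset (Fin (L+1) × Fin (L+1))).filter fun p => p.1 ≠ p.2,
            (Fintype.card V)^L := by
          apply Finset.sum_le_sum
          intro p hp
          exact hBpcard p (Finset.mem_filter.mp hp).2
      _ = ((Finset.univ : Finset (Fin (L+1) × Fin (L+1))).filter fun p => p.1 ≠ p.2).card
            * (Fintype.card V)^L := by rw [Finset.sum_const, smul_eq_mul]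
      _ ≤ (L+1)^2 * (Fintype.card V)^L := by
          apply Nat.mul_le_mul_right
          calc ((Finset.univ : Finset (Fin (L+1) × Fin (L+1))).filter fun p => p.1 ≠ p.2).card
              ≤ (Finset.univ : Finset (Fin (L+1) × Fin (L+1))).card := Finset.card_le_card (Finset.filter_subset _ _)
            _ = (L+1)^2 := by simp [Finset.card_univ, sq]
  calc (((Finset.univ : Finset (Fin (L+1) → V)).filter fun f => ¬ Function.Injective f).card : ℝ)
      ≤ (((L+1)^2 * (Fintype.card V)^L : ℕ) : ℝ) := by exact_mod_cast h1
    _ = ((L+1)^2 : ℝ) * ((Fintype.card V : ℝ))^L := by push_cast; ring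


variable {W : Type} [Fintype W]

omit [Fintype W] in
lemma pad_walk {R : SimpleGraph W} {i j : W} (w : R.Walk i j) (hpos : 0 < w.length) :
    ∀ m : ℕ, ∃ w' : R.Walk i j, w'.length = w.length + 2 * m := by
  intro m
  induction m with
  | zero => exact ⟨w, by ring⟩
  | succ m ih =>
    obtain ⟨w', hw'⟩ := ih
    cases w' with
    | nil =>
      exfalso
      simp only [SimpleGraph.Walk.length_nil] at hw'
      omega
    | cons h r =>
      refine ⟨SimpleGraph.Walk.cons h (SimpleGraph.Walk.cons h.symm (SimpleGraph.Walk.cons h r)), ?_⟩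
      simp only [SimpleGraph.Walk.length_cons] at hw' ⊢
      omega

omit [Fintype W] in
lemma exists_odd_walk {R : SimpleGraph W} (hconn : R.Connected) (hnb : ¬ IsBipartite R)
    (i j : W) : ∃ w : R.Walk i j, Odd w.length := by
  by_contra hno
  push_neg at hno
  apply hnb
  refine ⟨{v | ∃ p : R.Walk i v, Even p.length}, ?_⟩
  intro u v huv
  constructor
  · rintro ⟨p, hp⟩ ⟨q, hq⟩
    obtain ⟨t⟩ := hconn.preconnected i j
    have ht : ¬ Odd t.length := hno t
    have hodd : Odd (((p.concat huv).append q.reverse).append t).length := by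
      simp only [SimpleGraph.Walk.length_append, SimpleGraph.Walk.length_concat,
        SimpleGraph.Walk.length_reverse]
      rw [Nat.odd_iff] at ht ⊢
      rw [Nat.even_iff] at hp hq
      omega
    exact hno _ hodd
  · intro hvS
    obtain ⟨p⟩ := hconn.preconnected i u
    rcases Nat.even_or_odd p.length with he | ho
    · exact ⟨p, he⟩
    · exfalso
      apply hvS
      refine ⟨p.concat huv, ?_⟩
      rw [SimpleGraph.Walk.length_concat, Nat.even_add_one]
      exact Nat.not_even_iff_odd.mpr ho

lemma exists_short_odd_walk {R : SimpleGraph W} (hconn : R.Connected) (hnb : ¬ IsBipartite R)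
    (i j : W) :
    ∃ w : R.Walk i j, Odd w.length ∧ w.length ≤ 2 * Fintype.card W - 1 := by
  classical
  set N := Fintype.card W with hN
  set A : ℕ → Finset (W × Bool) := fun n => Finset.univ.filter
    (fun x => ∃ p : R.Walk x.1 i, p.length ≤ n ∧ p.length % 2 = cond x.2 1 0) with hA
  have hmono : ∀ {m n : ℕ}, m ≤ n → A m ⊆ A n := by
    intro m n hmn x hx
    simp only [hA, Finset.mem_filter, Finset.mem_univ, true_and] at hx ⊢
    obtain ⟨p, hp1, hp2⟩ := hx
    exact ⟨p, le_trans hp1 hmn, hp2⟩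
  have hstep : ∀ k, A k = A (k+1) → A (k+1) = A (k+2) := by
    intro k hk
    apply Finset.Subset.antisymm (hmono (by omega))
    intro x hx
    obtain ⟨xv, xb⟩ := x
    simp only [hA, Finset.mem_filter, Finset.mem_univ, true_and] at hx ⊢
    obtain ⟨p, hp1, hp2⟩ := hx
    cases p with
    | nil => exact ⟨SimpleGraph.Walk.nil, by simp, hp2⟩
    | @cons _ u _ h q =>
      simp only [SimpleGraph.Walk.length_cons] at hp1 hp2
      have hq : (u, !xb) ∈ A (k+1) := by
        simp only [hA, Finset.mem_filter, Finset.mem_univ, true_and]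
        refine ⟨q, by omega, ?_⟩
        cases xb <;> simp only [Bool.not_true, Bool.not_false, cond_true, cond_false] at hp2 ⊢ <;> omega
      rw [← hk] at hq
      simp only [hA, Finset.mem_filter, Finset.mem_univ, true_and] at hq
      obtain ⟨q', hq1, hq2⟩ := hq
      refine ⟨SimpleGraph.Walk.cons h q', ?_, ?_⟩
      · simp only [SimpleGraph.Walk.length_cons]; omega
      · simp only [SimpleGraph.Walk.length_cons]
        cases xb <;> simp only [Bool.not_true, Bool.not_false, cond_true, cond_false] at hq2 ⊢ <;> omega
  have hbase : (i, false) ∈ A 0 := by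
    simp only [hA, Finset.mem_filter, Finset.mem_univ, true_and]
    exact ⟨SimpleGraph.Walk.nil, by simp, by simp⟩
  have hcardle : ∀ n, (A n).card ≤ 2 * N := by
    intro n
    calc (A n).card ≤ (Finset.univ : Finset (W × Bool)).card := Finset.card_le_card (Finset.filter_subset _ _)
      _ = 2 * N := by simp [Finset.card_univ, Fintype.card_prod]; ring
  have hex : ∃ k < 2 * N, A k = A (k+1) := by
    by_contra hc
    push_neg at hc
    have hgrow : ∀ k, k ≤ 2 * N → k + 1 ≤ (A k).card := by
      intro k
      induction k with
      | zero => intro _; exact Finset.card_pos.mpr ⟨_, hbase⟩ 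
      | succ k ihk =>
        intro hk
        have h1 := ihk (by omega)
        have hne := hc k (by omega)
        have hss : A k ⊂ A (k+1) := lt_of_le_of_ne (hmono (by omega)) hne
        have := Finset.card_lt_card hss
        omega
    have := hgrow (2*N) le_rfl
    have := hcardle (2*N)
    omega
  obtain ⟨k, hk1, hk2⟩ := hex
  have hstable : ∀ m, A (k + m) = A (k + m + 1) := by
    intro m
    induction m with
    | zero => exact hk2
    | succ m ihm => exact hstep (k + m) ihm
  have haux : ∀ t, A (k + t) = A k := by
    intro t
    induction t with
    | zero => rfl
    | succ t iht => exact ((hstable t).symm).trans iht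
  have hsubk : ∀ m, A m ⊆ A (2 * N - 1) := by
    intro m
    rcases le_or_gt m (2 * N - 1) with hm | hm
    · exact hmono hm
    · have h1 : A m = A k := by
        have : m = k + (m - k) := by omega
        rw [this]
        exact haux (m - k)
      rw [h1]
      exact hmono (by omega)
  obtain ⟨w, hw⟩ := exists_odd_walk hconn hnb i j
  have hjm : (j, true) ∈ A w.length := by
    simp only [hA, Finset.mem_filter, Finset.mem_univ, true_and]
    refine ⟨w.reverse, by simp, ?_⟩
    simp only [SimpleGraph.Walk.length_reverse, cond_true]
    exact Nat.odd_iff.mp hw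
  have hjm2 := hsubk w.length hjm
  simp only [hA, Finset.mem_filter, Finset.mem_univ, true_and] at hjm2
  obtain ⟨p, hp1, hp2⟩ := hjm2
  refine ⟨p.reverse, ?_, ?_⟩
  · rw [SimpleGraph.Walk.length_reverse, Nat.odd_iff]
    simpa using hp2
  · rw [SimpleGraph.Walk.length_reverse]
    exact hp1



lemma exists_walk_length_eq_aux {W : Type} [Fintype W] {R : SimpleGraph W}
    (hconn : R.Connected) (hnb : ¬ IsBipartite R) (i j : W)
    (hW : 1 ≤ Fintype.card W) :
    ∃ w : R.Walk i j, w.length = 2 * Fintype.card W - 1 := by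
  obtain ⟨w, hodd, hle⟩ := exists_short_odd_walk hconn hnb i j
  obtain ⟨t, ht⟩ := hodd
  have hpos : 0 < w.length := by omega
  obtain ⟨w', hw'⟩ := pad_walk w hpos ((2 * Fintype.card W - 1 - w.length) / 2)
  refine ⟨w', ?_⟩
  rw [hw']
  omega


lemma build_chain {V : Type} [Fintype V] (G : SimpleGraph V) (d : ℝ) (PP : ℕ → Finset V)
    (Y : Finset V) (L : ℕ) :
    ∃ S : ℕ → Finset V, S L = Y ∧ ∀ k, k < L → S k = (PP k).filter
      (fun v => (d/2) * ((S (k+1)).card : ℝ) ≤ (((S (k+1)).filter (G.Adj v)).card : ℝ)) := by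
  classical
  set T : ℕ → Finset V := fun m => Nat.rec (motive := fun _ => Finset V) Y
    (fun m' prev => (PP (L - (m'+1))).filter
      (fun v => (d/2) * ((prev.card : ℕ) : ℝ) ≤ (((prev.filter (G.Adj v)).card : ℝ)))) m
    with hT
  have hT0 : T 0 = Y := rfl
  have hTs : ∀ m, T (m+1) = (PP (L - (m+1))).filter
      (fun v => (d/2) * ((T m).card : ℝ) ≤ (((T m).filter (G.Adj v)).card : ℝ)) :=
    fun m => rfl
  refine ⟨fun k => T (L - k), ?_, ?_⟩
  · show T (L - L) = Y
    rw [Nat.sub_self, hT0]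
  · intro k hk
    have h1 : L - k = (L - (k+1)) + 1 := by omega
    have h2 : L - ((L - (k+1)) + 1) = k := by omega
    show T (L - k) = _
    rw [h1, hTs, h2]

set_option maxHeartbeats 1000000 in
/-- If the reduced graph of a regular partition is connected and non-bipartite, then there is
an odd `L ≤ 2r` such that any two large subsets of any two clusters are joined by many paths
of length `L`. -/
theorem many_odd_paths_of_connected_nonbipartite_reduced_graph :
    ∀ d : ℝ, d ∈ Set.Ioc (0:ℝ) 1 → ∃ ε₀ : ℝ, 0 < ε₀ ∧
      ∀ ε ∈ Set.Ioc (0:ℝ) ε₀, ∃ r₀ : ℕ, ∀ r : ℕ, r₀ ≤ r → ∃ ζ₀ : ℝ, 0 < ζ₀ ∧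
        ∀ ζ ∈ Set.Ioc (0:ℝ) ζ₀, ∃ n₀ : ℕ, ∀ n : ℕ, n₀ ≤ n →
          ∀ (V : Type) [Fintype V], Fintype.card V = n →
            ∀ (G : SimpleGraph V) (P : Fin r → Finset V),
              IsRegularPartition G ε P →
              (reducedGraph G ε d P).Connected →
              ¬ IsBipartite (reducedGraph G ε d P) →
              ∃ L : ℕ, Odd L ∧ L ≤ 2 * r ∧
                ∀ i j : Fin r, ∀ X ⊆ P i, ∀ Y ⊆ P j,
                  d * ((P i).card : ℝ) ≤ (X.card : ℝ) →
                  d * ((P j).card : ℝ) ≤ (Y.card : ℝ) →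
                  ζ * (n : ℝ) ^ (L + 1) ≤
                    ((pathsBetween G L (↑X : Set V) (↑Y : Set V)).ncard : ℝ) := by
  intro d hd
  obtain ⟨hd0, hd1⟩ := hd
  refine ⟨d/4, by positivity, ?_⟩
  rintro ε ⟨hε0, hε1⟩
  refine ⟨1, ?_⟩
  intro r hr
  have hrR : (1:ℝ) ≤ (r:ℝ) := by exact_mod_cast hr
  have hrpos : (0:ℝ) < (r:ℝ) := by linarith
  set L := 2 * r - 1 with hLdef
  have hL1 : 1 ≤ L := by omega
  set c1 : ℝ := (d/2)^(2*L+1) * (1/(2*(r:ℝ)))^(L+1) with hc1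
  have hc1pos : 0 < c1 := by
    apply mul_pos
    · positivity
    · apply pow_pos; positivity
  refine ⟨c1/2, by positivity, ?_⟩
  rintro ζ ⟨hζ0, hζ1⟩
  refine ⟨2*r + 1 + ⌈2 * ((L:ℝ)+1)^2 / c1⌉₊, ?_⟩
  intro n hn V _ hcardV G P hpart hconn hnb
  refine ⟨L, by rw [Nat.odd_iff]; omega, by omega, ?_⟩
  intro i j X hX Y hY hXc hYc
  classical
  obtain ⟨hdisj, hcover, hbal, _⟩ := hpart
  -- cluster sizes
  have hsum : ∑ k, (P k).card = n := by
    have huniv : Finset.univ.biUnion P = (Finset.univ : Finset V) := by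
      apply Finset.eq_univ_of_forall
      intro v
      simp only [Finset.mem_biUnion]
      obtain ⟨k, hk⟩ := hcover v
      exact ⟨k, Finset.mem_univ k, hk⟩
    have hcb := Finset.card_biUnion (s := (Finset.univ : Finset (Fin r))) (t := P)
      (fun a _ b _ hab => hdisj a b hab)
    rw [huniv, Finset.card_univ, hcardV] at hcb
    exact hcb.symm
  have hsize : ∀ k : Fin r, n ≤ r * (P k).card + r := by
    intro k
    calc n = ∑ t, (P t).card := hsum.symm
      _ ≤ ∑ _t : Fin r, ((P k).card + 1) := Finset.sum_le_sum (fun t _ => hbal t k)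
      _ = r * (P k).card + r := by
          rw [Finset.sum_const, Finset.card_univ, Fintype.card_fin, smul_eq_mul]; ring
  have hn2r : 2 * r + 1 ≤ n := by omega
  have hPpos : ∀ k : Fin r, 0 < (P k).card := by
    intro k
    rcases Nat.eq_zero_or_pos (P k).card with h | h
    · exfalso
      have h2 := hsize k
      rw [h, Nat.mul_zero] at h2
      omega
    · exact h
  have hsizeR : ∀ k : Fin r, (n : ℝ) / (2*(r:ℝ)) ≤ ((P k).card : ℝ) := by
    intro k
    rw [div_le_iff₀ (by positivity)]
    have h1 := hsize k
    have h2 : n ≤ 2 * (r * (P k).card) := by omega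
    calc (n:ℝ) ≤ 2 * ((r:ℝ) * ((P k).card : ℝ)) := by exact_mod_cast h2
      _ = ((P k).card : ℝ) * (2*(r:ℝ)) := by ring
  -- walk in the reduced graph
  obtain ⟨w, hwlen⟩ := exists_walk_length_eq_aux hconn hnb i j
    (by rw [Fintype.card_fin]; omega)
  have hwL : w.length = L := by rw [hwlen, Fintype.card_fin]
  set c : ℕ → Fin r := fun t => w.getVert t with hcdef
  have hc0 : c 0 = i := w.getVert_zero
  have hcL : c L = j := by
    show w.getVert L = j
    rw [← hwL]
    exact w.getVert_length
  have hedge : ∀ t, t < L → (EpsRegular G ε (P (c t)) (P (c (t+1))) ∧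
      EpsRegular G ε (P (c (t+1))) (P (c t)) ∧ d ≤ density G (P (c t)) (P (c (t+1)))) := by
    intro t ht
    have hadj : (reducedGraph G ε d P).Adj (c t) (c (t+1)) :=
      w.adj_getVert_succ (by rw [hwL]; exact ht)
    rw [reducedGraph, SimpleGraph.fromRel_adj] at hadj
    obtain ⟨hne, hor⟩ := hadj
    rcases hor with ⟨h1, h2⟩ | ⟨h1, h2⟩
    · exact ⟨h1, epsRegular_symm h1, h2⟩
    · exact ⟨epsRegular_symm h1, h1, by rwa [density_comm]⟩
  -- the good sets, constructed backwards
  obtain ⟨S, hSL, hSstep⟩ := build_chain G d (fun k => P (c k)) Y L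
  have hinv : ∀ m, m ≤ L →
      (S (L - m) ⊆ P (c (L - m))) ∧
      ((d/2) * ((P (c (L - m))).card : ℝ) ≤ ((S (L - m)).card : ℝ)) ∧
      (L - m < L →
        ((((P (c (L - m))).filter (fun v => ¬ ((d/2) * ((S (L - m + 1)).card : ℝ) ≤
          (((S (L - m + 1)).filter (G.Adj v)).card : ℝ)))).card : ℝ)
          < ε * ((P (c (L - m))).card : ℝ))) := by
    intro m
    induction m with
    | zero =>
      intro _
      refine ⟨?_, ?_, ?_⟩
      · rw [Nat.sub_zero, hSL, hcL]; exact hY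
      · rw [Nat.sub_zero, hSL, hcL]
        have hp0 : (0:ℝ) ≤ ((P j).card : ℝ) := Nat.cast_nonneg _
        nlinarith [hYc]
      · intro h
        rw [Nat.sub_zero] at h
        exact absurd h (lt_irrefl L)
    | succ m ihm =>
      intro hm
      obtain ⟨ihsub, ihcard, -⟩ := ihm (by omega)
      have hkL : L - (m+1) < L := by omega
      set k := L - (m+1) with hkdef
      have hk1 : k + 1 = L - m := by omega
      rw [← hk1] at ihsub ihcard
      have hedgek := hedge k hkL
      have hreg : EpsRegular G ε (P (c (k+1))) (P (c k)) := hedgek.2.1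
      have hdens : d ≤ density G (P (c (k+1))) (P (c k)) := by
        rw [density_comm]; exact hedgek.2.2
      have hp0 : (0:ℝ) ≤ ((P (c (k+1))).card : ℝ) := Nat.cast_nonneg _
      have hXc' : ε * ((P (c (k+1))).card : ℝ) ≤ ((S (k+1)).card : ℝ) := by
        nlinarith [mul_nonneg (by linarith : (0:ℝ) ≤ d/2 - ε) hp0]
      have hX0 : 0 < (S (k+1)).card := by
        have hp : (0:ℝ) < ((P (c (k+1))).card : ℝ) := by exact_mod_cast hPpos (c (k+1))
        have h2 : (0:ℝ) < ((S (k+1)).card : ℝ) := lt_of_lt_of_le (by positivity) ihcard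
        exact_mod_cast h2
      have hB0 : 0 < (P (c k)).card := hPpos (c k)
      have hbad := good_nbrs G hε0 hreg ihsub hXc' hX0 hB0
      have hcompl : ((P (c k)).filter (fun v => ¬ ((d/2) * ((S (k+1)).card : ℝ) ≤
            (((S (k+1)).filter (G.Adj v)).card : ℝ))))
          ⊆ ((P (c k)).filter (fun b => (((S (k+1)).filter (G.Adj b)).card : ℝ)
              < (density G (P (c (k+1))) (P (c k)) - ε) * ((S (k+1)).card : ℝ))) := by
        intro v hv
        simp only [Finset.mem_filter, not_le] at hv ⊢
        refine ⟨hv.1, ?_⟩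
        have hc0' : (0:ℝ) ≤ ((S (k+1)).card : ℝ) := Nat.cast_nonneg _
        nlinarith [hv.2, mul_nonneg (by linarith :
          (0:ℝ) ≤ density G (P (c (k+1))) (P (c k)) - ε - d/2) hc0']
      have hcomplcard : ((((P (c k)).filter (fun v => ¬ ((d/2) * ((S (k+1)).card : ℝ) ≤
            (((S (k+1)).filter (G.Adj v)).card : ℝ)))).card : ℝ)
          < ε * ((P (c k)).card : ℝ)) :=
        lt_of_le_of_lt (by exact_mod_cast Finset.card_le_card hcompl) hbad
      refine ⟨?_, ?_, fun _ => ?_⟩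
      · rw [hSstep k hkL]; exact Finset.filter_subset _ _
      · rw [hSstep k hkL]
        have hPk0 : (0:ℝ) ≤ ((P (c k)).card : ℝ) := Nat.cast_nonneg _
        have hsplit := Finset.card_filter_add_card_filter_not (s := P (c k))
          (p := fun v => (d/2) * ((S (k+1)).card : ℝ) ≤
            (((S (k+1)).filter (G.Adj v)).card : ℝ))
        have hcast := congrArg (Nat.cast : ℕ → ℝ) hsplit
        push_cast at hcast
        nlinarith [mul_nonneg (by linarith : (0:ℝ) ≤ 1 - ε - d/2) hPk0]
      · exact hcomplcard
  have hSsub : ∀ kk, kk ≤ L → S kk ⊆ P (c kk) := by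
    intro kk hkk
    have h := (hinv (L - kk) (by omega)).1
    rwa [Nat.sub_sub_self hkk] at h
  have hScard : ∀ kk, kk ≤ L → (d/2) * ((P (c kk)).card : ℝ) ≤ ((S kk).card : ℝ) := by
    intro kk hkk
    have h := (hinv (L - kk) (by omega)).2.1
    rwa [Nat.sub_sub_self hkk] at h
  have hcompl0 : ((((P (c 0)).filter (fun v => ¬ ((d/2) * ((S 1).card : ℝ) ≤
        (((S 1).filter (G.Adj v)).card : ℝ)))).card : ℝ) < ε * ((P (c 0)).card : ℝ)) := by
    have h := (hinv L le_rfl).2.2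
    rw [Nat.sub_self] at h
    exact h (by omega)
  -- the modified chain of sets with X at position 0
  set S' : ℕ → Finset V := fun kk => if kk = 0 then X ∩ S 0 else S kk with hS'def
  have hS'0 : S' 0 = X ∩ S 0 := by simp [hS'def]
  have hS'pos : ∀ kk, kk ≠ 0 → S' kk = S kk := by
    intro kk h; simp [hS'def, h]
  have hchainhyp : ∀ kk, kk < L → ∀ v ∈ S' kk,
      (d/2) * ((S' (kk+1)).card : ℝ) ≤ (((S' (kk+1)).filter (G.Adj v)).card : ℝ) := by
    intro kk hkk v hv
    rw [hS'pos (kk+1) (by omega)]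
    have hvS : v ∈ S kk := by
      by_cases h0 : kk = 0
      · subst h0
        rw [hS'0] at hv
        exact (Finset.mem_inter.mp hv).2
      · rwa [hS'pos kk h0] at hv
    rw [hSstep kk hkk] at hvS
    exact (Finset.mem_filter.mp hvS).2
  have hS'card : ∀ kk, kk ≤ L → (d/2) * ((n:ℝ)/(2*(r:ℝ))) ≤ ((S' kk).card : ℝ) := by
    intro kk hkk
    by_cases h0 : kk = 0
    · subst h0
      rw [hS'0]
      -- |X ∩ S 0| ≥ |X| - (complement count)
      have hXP : X ⊆ P (c 0) := by rw [hc0]; exact hX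
      have hsub0 : X ⊆ (X ∩ S 0) ∪ ((P (c 0)).filter (fun v => ¬ ((d/2) * ((S 1).card : ℝ) ≤
          (((S 1).filter (G.Adj v)).card : ℝ)))) := by
        intro x hx
        by_cases hxs : x ∈ S 0
        · exact Finset.mem_union_left _ (Finset.mem_inter.mpr ⟨hx, hxs⟩)
        · apply Finset.mem_union_right
          refine Finset.mem_filter.mpr ⟨hXP hx, ?_⟩
          intro hcond
          exact hxs ((hSstep 0 (by omega)) ▸ Finset.mem_filter.mpr ⟨hXP hx, hcond⟩)
      have hcardle : X.card ≤ (X ∩ S 0).card + ((P (c 0)).filter (fun v => ¬ ((d/2) * ((S 1).card : ℝ) ≤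
          (((S 1).filter (G.Adj v)).card : ℝ)))).card :=
        le_trans (Finset.card_le_card hsub0) (Finset.card_union_le _ _)
      have hcR : (X.card : ℝ) ≤ ((X ∩ S 0).card : ℝ) + (((P (c 0)).filter (fun v => ¬ ((d/2) * ((S 1).card : ℝ) ≤
          (((S 1).filter (G.Adj v)).card : ℝ)))).card : ℝ) := by exact_mod_cast hcardle
      have hXc0 : d * ((P (c 0)).card : ℝ) ≤ (X.card : ℝ) := by rw [hc0]; exact hXc
      have hP0 : (0:ℝ) ≤ ((P (c 0)).card : ℝ) := Nat.cast_nonneg _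
      have hsz := hsizeR (c 0)
      nlinarith [mul_nonneg (by linarith : (0:ℝ) ≤ d - ε - d/2) hP0,
        mul_nonneg (by linarith : (0:ℝ) ≤ d/2) (by positivity : (0:ℝ) ≤ (n:ℝ)/(2*(r:ℝ)))]
    · rw [hS'pos kk h0]
      have h1 := hScard kk hkk
      have h2 := hsizeR (c kk)
      nlinarith [mul_nonneg (by linarith : (0:ℝ) ≤ d/2) (by positivity : (0:ℝ) ≤ (n:ℝ)/(2*(r:ℝ)))]
  -- count the chains
  have hchain := chainSet_card G (by positivity : (0:ℝ) ≤ d/2) S' L hchainhyp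
  have hfactor : ∀ kk ∈ Finset.range L,
      (d/2) * ((d/2) * ((n:ℝ)/(2*(r:ℝ)))) ≤ (d/2) * ((S' (kk+1)).card : ℝ) := by
    intro kk hkk
    have h := hS'card (kk+1) (by have := Finset.mem_range.mp hkk; omega)
    nlinarith [h]
  have hprodlb : ((d/2) * ((d/2) * ((n:ℝ)/(2*(r:ℝ)))))^L
      ≤ ∏ kk ∈ Finset.range L, ((d/2) * ((S' (kk+1)).card : ℝ)) := by
    rw [show ((d/2) * ((d/2) * ((n:ℝ)/(2*(r:ℝ)))))^L
        = ∏ _kk ∈ Finset.range L, ((d/2) * ((d/2) * ((n:ℝ)/(2*(r:ℝ))))) by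
      rw [Finset.prod_const, Finset.card_range]]
    apply Finset.prod_le_prod
    · intro kk _; positivity
    · exact hfactor
  have hchainlb : c1 * (n:ℝ)^(L+1) ≤ ((chainSet G L S').card : ℝ) := by
    refine le_trans ?_ hchain
    have h0 := hS'card 0 (by omega)
    have halg : c1 * (n:ℝ)^(L+1)
        = ((d/2) * ((n:ℝ)/(2*(r:ℝ)))) * (((d/2) * ((d/2) * ((n:ℝ)/(2*(r:ℝ)))))^L) := by
      rw [hc1]
      rw [show 2*L+1 = (2*L)+1 by rfl]
      rw [pow_succ, pow_succ, two_mul, pow_add, mul_pow, mul_pow, div_pow, div_pow, one_pow]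
      field_simp
      rw [div_pow]
      field_simp
      ring
    rw [halg]
    have hnn : (0:ℝ) ≤ ((d/2) * ((n:ℝ)/(2*(r:ℝ)))) := by positivity
    apply mul_le_mul h0 hprodlb (by positivity) (Nat.cast_nonneg _)
  -- remove non-injective chains
  set Winj := (chainSet G L S').filter (fun f => Function.Injective f) with hWinjdef
  have hWsplit := Finset.card_filter_add_card_filter_not (s := chainSet G L S')
    (p := fun f => Function.Injective f)
  have hnoninj : (((chainSet G L S').filter (fun f => ¬ Function.Injective f)).card : ℝ)
      ≤ ((L:ℝ)+1)^2 * (n:ℝ)^L := by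
    have hsub2 : (chainSet G L S').filter (fun f => ¬ Function.Injective f)
        ⊆ (Finset.univ.filter fun f : Fin (L+1) → V => ¬ Function.Injective f) := by
      intro f hf
      exact Finset.mem_filter.mpr ⟨Finset.mem_univ f, (Finset.mem_filter.mp hf).2⟩
    calc (((chainSet G L S').filter (fun f => ¬ Function.Injective f)).card : ℝ)
        ≤ (((Finset.univ.filter fun f : Fin (L+1) → V => ¬ Function.Injective f)).card : ℝ) := by
          exact_mod_cast Finset.card_le_card hsub2
      _ ≤ ((L+1)^2 : ℝ) * ((Fintype.card V : ℝ))^L := card_noninj_le L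
      _ = ((L:ℝ)+1)^2 * (n:ℝ)^L := by rw [hcardV]
  have hWinjlb : (c1/2) * (n:ℝ)^(L+1) ≤ (Winj.card : ℝ) := by
    have hceil : (⌈2 * ((L:ℝ)+1)^2 / c1⌉₊ : ℝ) ≤ (n:ℝ) := by
      exact_mod_cast (by omega : ⌈2 * ((L:ℝ)+1)^2 / c1⌉₊ ≤ n)
    have hnR : 2 * ((L:ℝ)+1)^2 / c1 ≤ (n:ℝ) := le_trans (Nat.le_ceil _) hceil
    have h2 : ((L:ℝ)+1)^2 * (n:ℝ)^L ≤ (c1/2) * (n:ℝ)^(L+1) := by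
      rw [div_le_iff₀ hc1pos] at hnR
      have h3 : ((L:ℝ)+1)^2 ≤ (c1/2) * (n:ℝ) := by linarith
      calc ((L:ℝ)+1)^2 * (n:ℝ)^L ≤ ((c1/2) * (n:ℝ)) * (n:ℝ)^L :=
            mul_le_mul_of_nonneg_right h3 (by positivity)
        _ = (c1/2) * (n:ℝ)^(L+1) := by ring
    have hcast := congrArg (Nat.cast : ℕ → ℝ) hWsplit
    push_cast at hcast
    rw [hWinjdef]
    linarith
  -- map injective chains to paths
  have hWtoP : ∀ f, f ∈ Winj → ∃ wk : G.Walk (f 0) (f (Fin.last L)), wk.support = List.ofFn f := by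
    intro f hf
    have hfc := (Finset.mem_filter.mp hf).1
    simp only [chainSet, Finset.mem_filter, Finset.mem_univ, true_and] at hfc
    apply exists_walk_of_chain
    · rw [List.Chain', List.isChain_iff_getElem]
      intro t ht
      rw [List.length_ofFn] at ht
      simp only [List.get_eq_getElem, List.getElem_ofFn]
      exact hfc.2 ⟨t, by omega⟩
    · rw [List.ofFn_succ]; rfl
    · have hlt : L < (List.ofFn f).length := by rw [List.length_ofFn]; omega
      rw [List.getLast?_eq_getElem?, List.length_ofFn]
      rw [show L + 1 - 1 = L by omega]
      rw [List.getElem?_eq_getElem hlt]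
      congr 1
      rw [List.getElem_ofFn]
      rfl
  set F : (Fin (L+1) → V) → (Σ u : V, Σ v : V, G.Walk u v) := fun f =>
    if h : ∃ wk : G.Walk (f 0) (f (Fin.last L)), wk.support = List.ofFn f then
      ⟨f 0, f (Fin.last L), h.choose⟩
    else ⟨f 0, f 0, SimpleGraph.Walk.nil⟩ with hFdef
  have hFsupp : ∀ f ∈ Winj, (F f).2.2.support = List.ofFn f
      ∧ F f ∈ pathsBetween G L (↑X : Set V) (↑Y : Set V) := by
    intro f hf
    have hex := hWtoP f hf
    have hfmem := Finset.mem_filter.mp hf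
    have hfinj : Function.Injective f := hfmem.2
    have hfc := hfmem.1
    simp only [chainSet, Finset.mem_filter, Finset.mem_univ, true_and] at hfc
    have hFeq : F f = ⟨f 0, f (Fin.last L), hex.choose⟩ := by
      rw [hFdef]
      exact dif_pos hex
    have hsupp : (F f).2.2.support = List.ofFn f := by
      rw [hFeq]
      exact hex.choose_spec
    refine ⟨hsupp, ?_, ?_, ?_, ?_⟩
    · -- IsPath
      rw [SimpleGraph.Walk.isPath_def, hsupp]
      exact List.nodup_ofFn.mpr hfinj
    · -- length
      have hl := (F f).2.2.length_support
      rw [hsupp, List.length_ofFn] at hl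
      omega
    · -- start in X
      have hm := hfc.1 (0 : Fin (L+1))
      rw [hFeq]
      show f 0 ∈ (↑X : Set V)
      have : f 0 ∈ S' 0 := by simpa using hm
      rw [hS'0] at this
      exact Finset.mem_coe.mpr (Finset.mem_inter.mp this).1
    · -- end in Y
      have hm := hfc.1 (Fin.last L)
      rw [hFeq]
      show f (Fin.last L) ∈ (↑Y : Set V)
      have h1 : f (Fin.last L) ∈ S' L := by simpa using hm
      rw [hS'pos L (by omega), hSL] at h1
      exact Finset.mem_coe.mpr h1
  have hinjOnF : Set.InjOn F ↑Winj := by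
    intro f hf g hg hFfg
    have h1 := (hFsupp f hf).1
    have h2 := (hFsupp g hg).1
    apply List.ofFn_injective
    rw [← h1, ← h2, hFfg]
  have hfinite : (pathsBetween G L (↑X : Set V) (↑Y : Set V)).Finite := by
    apply Set.Finite.of_finite_image
      (f := fun q : Σ u : V, Σ v : V, G.Walk u v => q.2.2.support)
    · apply Set.Finite.subset (lists_length_finite (L+1))
      rintro l ⟨q, hq, rfl⟩
      simp only [Set.mem_setOf_eq]
      rw [q.2.2.length_support, hq.2.1]
    · rintro ⟨u, v, wk⟩ h1 ⟨u', v', wk'⟩ h2 hsup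
      simp only at hsup
      have hu : u = u' := by
        have h3 : u :: wk.support.tail = u' :: wk'.support.tail := by
          rw [← wk.support_eq_cons, ← wk'.support_eq_cons, hsup]
        exact (List.cons.inj h3).1
      subst hu
      have hv : v = v' := by
        have e1 := wk.reverse.support_eq_cons
        have e2 := wk'.reverse.support_eq_cons
        rw [SimpleGraph.Walk.support_reverse] at e1 e2
        have h3 : v :: wk.support.reverse.tail = v' :: wk'.support.reverse.tail := by
          rw [← e1, ← e2, hsup]
        exact (List.cons.inj h3).1
      subst hv
      rw [walk_eq_of_support_eq wk wk' hsup]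
  have hle := Set.ncard_le_ncard_of_injOn F (fun f hf => (hFsupp f hf).2) hinjOnF hfinite
  have hle2 : Winj.card ≤ (pathsBetween G L (↑X : Set V) (↑Y : Set V)).ncard := by
    rw [← Set.ncard_coe_finset Winj]
    exact hle
  have hleR : (Winj.card : ℝ) ≤ ((pathsBetween G L (↑X : Set V) (↑Y : Set V)).ncard : ℝ) := by
    exact_mod_cast hle2
  have hz : ζ * (n:ℝ)^(L+1) ≤ (c1/2) * (n:ℝ)^(L+1) :=
    mul_le_mul_of_nonneg_right hζ1 (by positivity)
  linarith

end Stmt
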